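/- Given any (k, c, δ, ε)-SKE protocol over a full-access multipath setting, there exists a (k, c, 0, ε′)-SKE protocol (perfect reliability, same key length and communication) with secrecy parameter ε′ ≤ ε + δ. -/

import Mathlib

open scoped BigOperators Classical
noncomputable section

/-- Statistical distance between two mass functions on a finite set. -/
def SD {X : Type*} [Fintype X] (P Q : X → ℝ) : ℝ := (1/2) * ∑ x, |P x - Q x|

/-- **Derandomization of SKE in the full-access setting: perfect reliability at secrecy
cost `δ`.**

Model: in the full-access setting Alice and Bob share the transcript `X` (distributed
according to `pX`); Eve's view is `ζ(X)`.  Alice computes `S = f(X, Rnd_A)` and Bob computes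
`Ŝ = g(X, Rnd_B)` with independent local randomness `Rnd_A ~ pA`, `Rnd_B ~ pB`.
Reliability: `Pr(Ŝ ≠ S) ≤ δ`.  Secrecy: `SD([S, Z], [U_k, Z]) ≤ ε`.

Conclusion: there are deterministic key-derivation functions `f', g'` that always agree
(perfect reliability, same key length and communication) with secrecy parameter
`ε' ≤ ε + δ`. -/
theorem ske_derandomization
    {ΩX RA RB Z : Type*} [Fintype ΩX] [Fintype RA] [Fintype RB] [Fintype Z]
    (k : ℕ) (δ ε : ℝ)
    (pX : ΩX → ℝ) (pA : RA → ℝ) (pB : RB → ℝ)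
    (hX0 : ∀ x, 0 ≤ pX x) (hX1 : ∑ x, pX x = 1)
    (hA0 : ∀ a, 0 ≤ pA a) (hA1 : ∑ a, pA a = 1)
    (hB0 : ∀ b, 0 ≤ pB b) (hB1 : ∑ b, pB b = 1)
    (f : ΩX → RA → Fin (2 ^ k)) (g : ΩX → RB → Fin (2 ^ k)) (ζ : ΩX → Z)
    -- δ-reliability
    (hrel : (∑ x, ∑ a, ∑ b, if f x a ≠ g x b then pX x * pA a * pB b else 0) ≤ δ)
    -- ε-secrecy of Alice's key given Eve's view
    (hsec : SD
      (fun sz : Fin (2 ^ k) × Z =>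
        ∑ x, ∑ a, if f x a = sz.1 ∧ ζ x = sz.2 then pX x * pA a else 0)
      (fun sz : Fin (2 ^ k) × Z =>
        ((2 : ℝ) ^ k)⁻¹ * ∑ x, if ζ x = sz.2 then pX x else 0) ≤ ε) :
    ∃ f' g' : ΩX → Fin (2 ^ k),
      (∀ x, f' x = g' x) ∧
      SD (fun sz : Fin (2 ^ k) × Z =>
            ∑ x, if f' x = sz.1 ∧ ζ x = sz.2 then pX x else 0)
         (fun sz : Fin (2 ^ k) × Z =>
            ((2 : ℝ) ^ k)⁻¹ * ∑ x, if ζ x = sz.2 then pX x else 0) ≤ ε + δ := by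
  classical
  have hfin : Nonempty (Fin (2 ^ k)) := ⟨⟨0, by positivity⟩⟩
  -- P x s = probability that Alice's key is s given transcript x
  set P : ΩX → Fin (2 ^ k) → ℝ := fun x s => ∑ a, if f x a = s then pA a else 0 with hP
  have hchoice : ∀ x : ΩX, ∃ s ∈ (Finset.univ : Finset (Fin (2 ^ k))),
      ∀ s' ∈ (Finset.univ : Finset (Fin (2 ^ k))), P x s' ≤ P x s := fun x =>
    Finset.exists_max_image Finset.univ (P x) Finset.univ_nonempty
  choose f' hmem hmax using hchoice
  refine ⟨f', f', fun x => rfl, ?_⟩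
  -- the mismatch mass
  set m : ℝ := ∑ x, ∑ a, if f x a ≠ f' x then pX x * pA a else 0 with hm
  -- Step 1 : m ≤ δ
  have hmδ : m ≤ δ := by
    refine le_trans ?_ hrel
    apply Finset.sum_le_sum
    intro x _
    -- pull out pX x
    have h1 : (∑ a, if f x a ≠ f' x then pX x * pA a else 0)
        = pX x * ∑ a, (if f x a ≠ f' x then pA a else 0) := by
      rw [Finset.mul_sum]; apply Finset.sum_congr rfl; intro a _
      by_cases h : f x a = f' x <;> simp [h]
    have h2 : (∑ a, ∑ b, if f x a ≠ g x b then pX x * pA a * pB b else 0)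
        = pX x * ∑ a, ∑ b, (if f x a ≠ g x b then pA a * pB b else 0) := by
      rw [Finset.mul_sum]; apply Finset.sum_congr rfl; intro a _
      rw [Finset.mul_sum]; apply Finset.sum_congr rfl; intro b _
      by_cases h : f x a = g x b <;> simp [h, mul_assoc]
    rw [h1, h2]
    apply mul_le_mul_of_nonneg_left _ (hX0 x)
    -- per-x inequality
    set Q : Fin (2 ^ k) → ℝ := fun s => ∑ b, if g x b = s then pB b else 0 with hQ
    have hQ0 : ∀ s, 0 ≤ Q s := fun s =>
      Finset.sum_nonneg fun b _ => by by_cases h : g x b = s <;> simp [h, hB0 b]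
    have hQ1 : ∑ s, Q s = 1 := by
      rw [hQ]
      rw [Finset.sum_comm]
      calc (∑ b, ∑ s, if g x b = s then pB b else 0) = ∑ b, pB b := by
            apply Finset.sum_congr rfl; intro b _
            simp [Finset.sum_ite_eq]
        _ = 1 := hB1
    have hLHS : (∑ a, if f x a ≠ f' x then pA a else 0) = 1 - P x (f' x) := by
      have : (∑ a, if f x a ≠ f' x then pA a else 0)
          = ∑ a, (pA a - if f x a = f' x then pA a else 0) := by
        apply Finset.sum_congr rfl; intro a _
        by_cases h : f x a = f' x <;> simp [h]
      rw [this, Finset.sum_sub_distrib, hA1, hP]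
    have hRHS : (∑ a, ∑ b, if f x a ≠ g x b then pA a * pB b else 0)
        = 1 - ∑ a, pA a * Q (f x a) := by
      have : ∀ a, (∑ b, if f x a ≠ g x b then pA a * pB b else 0)
          = pA a - pA a * Q (f x a) := by
        intro a
        have e1 : (∑ b, if f x a ≠ g x b then pA a * pB b else 0)
            = ∑ b, (pA a * pB b - if g x b = f x a then pA a * pB b else 0) := by
          apply Finset.sum_congr rfl; intro b _
          by_cases h : f x a = g x b <;> simp [h, eq_comm]
        rw [e1, Finset.sum_sub_distrib, ← Finset.mul_sum, hB1, mul_one, hQ]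
        simp [Finset.mul_sum, mul_ite]
      rw [Finset.sum_congr rfl fun a _ => this a, Finset.sum_sub_distrib, hA1]
    rw [hLHS, hRHS]
    have key : (∑ a, pA a * Q (f x a)) ≤ P x (f' x) := by
      have e : (∑ a, pA a * Q (f x a)) = ∑ s, Q s * P x s := by
        have : ∀ a, pA a * Q (f x a) = ∑ s, if f x a = s then Q s * pA a else 0 := by
          intro a; simp [Finset.sum_ite_eq, mul_comm]
        rw [Finset.sum_congr rfl fun a _ => this a, Finset.sum_comm]
        apply Finset.sum_congr rfl; intro s _
        rw [hP]; simp [Finset.mul_sum, mul_ite]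
      rw [e]
      calc (∑ s, Q s * P x s) ≤ ∑ s, Q s * P x (f' x) := by
            apply Finset.sum_le_sum; intro s _
            exact mul_le_mul_of_nonneg_left (hmax x s (Finset.mem_univ s)) (hQ0 s)
        _ = P x (f' x) := by rw [← Finset.sum_mul, hQ1, one_mul]
    linarith
  have hm0 : 0 ≤ m := Finset.sum_nonneg fun x _ => Finset.sum_nonneg fun a _ => by
    by_cases h : f x a = f' x <;>
      simp [h, mul_nonneg (hX0 x) (hA0 _)]
  -- Step 2 : SD between derandomized and original key distributions ≤ m
  set Pnew : Fin (2 ^ k) × Z → ℝ := fun sz =>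
      ∑ x, if f' x = sz.1 ∧ ζ x = sz.2 then pX x else 0 with hPnew
  set Pold : Fin (2 ^ k) × Z → ℝ := fun sz =>
      ∑ x, ∑ a, if f x a = sz.1 ∧ ζ x = sz.2 then pX x * pA a else 0 with hPold
  set U : Fin (2 ^ k) × Z → ℝ := fun sz =>
      ((2 : ℝ) ^ k)⁻¹ * ∑ x, if ζ x = sz.2 then pX x else 0 with hU
  have hSD2 : SD Pnew Pold ≤ m := by
    unfold SD
    rw [hm]
    have hptw : ∀ sz : Fin (2 ^ k) × Z, |Pnew sz - Pold sz|
        ≤ ∑ x, ∑ a, if f x a ≠ f' x then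
            ((if f' x = sz.1 ∧ ζ x = sz.2 then pX x * pA a else 0)
              + (if f x a = sz.1 ∧ ζ x = sz.2 then pX x * pA a else 0)) else 0 := by
      intro sz
      have e1 : Pnew sz = ∑ x, ∑ a, if f' x = sz.1 ∧ ζ x = sz.2 then pX x * pA a else 0 := by
        rw [hPnew]
        apply Finset.sum_congr rfl; intro x _
        by_cases h : f' x = sz.1 ∧ ζ x = sz.2 <;>
          simp [h, ← Finset.mul_sum, hA1]
      rw [e1, hPold, ← Finset.sum_sub_distrib]
      refine le_trans (Finset.abs_sum_le_sum_abs _ _) (Finset.sum_le_sum ?_)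
      intro x _
      rw [← Finset.sum_sub_distrib]
      refine le_trans (Finset.abs_sum_le_sum_abs _ _) (Finset.sum_le_sum ?_)
      intro a _
      by_cases hfa : f x a = f' x
      · simp [hfa]
      · have h0 : 0 ≤ pX x * pA a := mul_nonneg (hX0 x) (hA0 a)
        simp only [if_neg, hfa, ne_eq, not_false_eq_true, if_true]
        have habs : ∀ u v : ℝ, 0 ≤ u → 0 ≤ v → |u - v| ≤ u + v := by
          intro u v hu hv; rw [abs_sub_le_iff]; constructor <;> linarith
        apply habs <;> (split <;> simp [h0])
    calc (1/2 : ℝ) * ∑ sz, |Pnew sz - Pold sz|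
        ≤ (1/2) * ∑ sz : Fin (2 ^ k) × Z, ∑ x, ∑ a, (if f x a ≠ f' x then
            ((if f' x = sz.1 ∧ ζ x = sz.2 then pX x * pA a else 0)
              + (if f x a = sz.1 ∧ ζ x = sz.2 then pX x * pA a else 0)) else 0) := by
          apply mul_le_mul_of_nonneg_left _ (by norm_num)
          exact Finset.sum_le_sum fun sz _ => hptw sz
      _ = (1/2) * ∑ x, ∑ a, ∑ sz : Fin (2 ^ k) × Z, (if f x a ≠ f' x then
            ((if f' x = sz.1 ∧ ζ x = sz.2 then pX x * pA a else 0)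
              + (if f x a = sz.1 ∧ ζ x = sz.2 then pX x * pA a else 0)) else 0) := by
          rw [Finset.sum_comm]
          congr 1
          apply Finset.sum_congr rfl; intro x _
          rw [Finset.sum_comm]
      _ ≤ ∑ x, ∑ a, if f x a ≠ f' x then pX x * pA a else 0 := by
          have : ∀ x a, (∑ sz : Fin (2 ^ k) × Z, (if f x a ≠ f' x then
              ((if f' x = sz.1 ∧ ζ x = sz.2 then pX x * pA a else 0)
                + (if f x a = sz.1 ∧ ζ x = sz.2 then pX x * pA a else 0)) else 0))
              = 2 * (if f x a ≠ f' x then pX x * pA a else 0) := by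
            intro x a
            by_cases h : f x a = f' x
            · simp [h]
            · simp only [h, ne_eq, not_false_eq_true, if_true]
              rw [Finset.sum_add_distrib]
              have g1 : ∀ (s₀ : Fin (2 ^ k)),
                  (∑ sz : Fin (2 ^ k) × Z, if s₀ = sz.1 ∧ ζ x = sz.2 then pX x * pA a else 0)
                  = pX x * pA a := by
                intro s₀
                rw [Fintype.sum_prod_type]
                rw [Finset.sum_eq_single s₀]
                · rw [Finset.sum_eq_single (ζ x)]
                  · simp
                  · intro z _ hz; simp [Ne.symm hz]
                  · simp
                · intro s _ hs; simp [Ne.symm hs]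
                · simp
              rw [g1, g1]; ring
          rw [Finset.sum_congr rfl fun x _ => Finset.sum_congr rfl fun a _ => this x a]
          rw [Finset.mul_sum]
          apply Finset.sum_le_sum; intro x _
          rw [Finset.mul_sum, ← Finset.sum_congr rfl fun a _ => rfl]
          apply Finset.sum_le_sum; intro a _
          rw [← mul_assoc]; norm_num
  -- Step 3 : triangle inequality
  have htri : SD Pnew U ≤ SD Pnew Pold + SD Pold U := by
    unfold SD
    rw [← mul_add, ← Finset.sum_add_distrib]
    apply mul_le_mul_of_nonneg_left _ (by norm_num : (0:ℝ) ≤ 1/2)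
    apply Finset.sum_le_sum; intro sz _
    calc |Pnew sz - U sz| = |(Pnew sz - Pold sz) + (Pold sz - U sz)| := by ring_nf
      _ ≤ |Pnew sz - Pold sz| + |Pold sz - U sz| := abs_add_le _ _
  calc SD Pnew U ≤ SD Pnew Pold + SD Pold U := htri
    _ ≤ m + ε := add_le_add hSD2 hsec
    _ ≤ ε + δ := by linarith
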